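/- The following statements are equivalent: (a) 𝓜₀ is a closed and convex subset of X*×ℝ (weak*-topology on X* times the usual topology on ℝ); (b) for every c ∈ X* such that inf_{x∈F} ⟨c,x⟩ > −∞, there exists (ū, λ̄) ∈ 𝒰 × S⁺ with inf_{x∈X} [⟨c,x⟩ + λ̄(G_ū(x))] = inf_{x∈F} ⟨c,x⟩; that is, the robust strong duality inf(RP_c) = max(RD_c), with the dual supremum attained, holds for all such c. -/

import Mathlib

open Pointwise Topology Filter Set

/-- Every continuous linear functional on a weak dual is evaluation at a point. -/
lemma weakDual_dual_rep {X : Type*} [AddCommGroup X] [Module ℝ X] [TopologicalSpace X]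
    (f : WeakDual ℝ X →ₗ[ℝ] ℝ) (hf : Continuous f) :
    ∃ x : X, ∀ l : WeakDual ℝ X, f l = l x := by
  have hb := LinearMap.hasBasis_weakBilin (topDualPairing ℝ X)
  have h1 : f ⁻¹' Set.Ioo (-1 : ℝ) 1 ∈ 𝓝 (0 : WeakDual ℝ X) := by
    refine hf.continuousAt.preimage_mem_nhds ?_
    rw [map_zero]
    exact Ioo_mem_nhds (by norm_num) (by norm_num)
  replace h1 := hb.mem_iff.mp h1
  obtain ⟨U, hU, hUsub⟩ := h1
  obtain ⟨s, r, hr, rfl⟩ := (topDualPairing ℝ X).toSeminormFamily.basisSets_iff.mp hU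
  -- kernel claim
  have hker : ∀ l : WeakDual ℝ X, (∀ x ∈ s, l x = 0) → f l = 0 := by
    intro l hl
    by_contra hfl
    have hmem : ∀ c : ℝ, c • l ∈ (s.sup (topDualPairing ℝ X).toSeminormFamily).ball 0 r := by
      intro c
      refine (Seminorm.mem_ball_zero (s.sup (topDualPairing ℝ X).toSeminormFamily)).mpr ?_
      rcases s.eq_empty_or_nonempty with h | h
      · simp [h, hr]
        exact hr
      · refine (Seminorm.finset_sup_apply_lt hr ?_ )
        intro i hi
        have h0 : ((topDualPairing ℝ X) l) i = 0 := hl i hi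
        show ‖c • (l i)‖ < r
        rw [hl i hi, smul_zero, norm_zero]
        exact hr
    have h2 : f ((2 / f l) • l) ∈ Set.Ioo (-1 : ℝ) 1 := hUsub (hmem (2 / f l))
    simp only [Set.mem_preimage, map_smul, smul_eq_mul, Set.mem_Ioo] at h2
    rw [div_mul_cancel₀ 2 hfl] at h2
    norm_num at h2
  -- span argument
  let L : {x // x ∈ s} → (WeakDual ℝ X →ₗ[ℝ] ℝ) := fun x =>
    { toFun := fun l => l x.1
      map_add' := fun a b => rfl
      map_smul' := fun c a => rfl }
  have hle : ⨅ i, LinearMap.ker (L i) ≤ LinearMap.ker f := by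
    intro l hl
    rw [Submodule.mem_iInf] at hl
    exact hker l fun x hx => hl ⟨x, hx⟩
  have hspan := mem_span_of_iInf_ker_le_ker hle
  -- the set of evaluations is a submodule
  let P : Submodule ℝ (WeakDual ℝ X →ₗ[ℝ] ℝ) :=
    { carrier := {g | ∃ x : X, ∀ l : WeakDual ℝ X, g l = l x}
      zero_mem' := ⟨0, fun l => by simp⟩
      add_mem' := by
        rintro g g' ⟨x, hx⟩ ⟨x', hx'⟩
        exact ⟨x + x', fun l => by simp [hx l, hx' l]⟩
      smul_mem' := by
        rintro c g ⟨x, hx⟩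
        exact ⟨c • x, fun l => by simp [hx l, map_smul, smul_eq_mul]⟩ }
  have : Submodule.span ℝ (Set.range L) ≤ P := by
    rw [Submodule.span_le]
    rintro g ⟨i, rfl⟩
    exact ⟨i.1, fun l => rfl⟩
  exact this hspan

lemma prod_dual_rep {X : Type*} [AddCommGroup X] [Module ℝ X] [TopologicalSpace X]
    (f : (WeakDual ℝ X × ℝ) →L[ℝ] ℝ) :
    ∃ (y : X) (s : ℝ), ∀ q : WeakDual ℝ X × ℝ, f q = q.1 y + s * q.2 := by
  have hcont : Continuous fun l : WeakDual ℝ X => f (l, 0) :=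
    f.continuous.comp (continuous_id.prodMk continuous_const)
  have hlin : ∃ x : X, ∀ l : WeakDual ℝ X, f (l, 0) = l x := by
    refine weakDual_dual_rep
      { toFun := fun l => f (l, 0)
        map_add' := fun a b => by
          show f (a + b, 0) = f (a, 0) + f (b, 0)
          rw [show ((a + b, 0) : WeakDual ℝ X × ℝ) = (a, 0) + (b, 0) by simp, map_add]
        map_smul' := fun c a => by
          simp only [RingHom.id_apply, smul_eq_mul]
          rw [show ((c • a, 0) : WeakDual ℝ X × ℝ) = c • (a, 0) by simp, map_smul,
            smul_eq_mul] } hcont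
  obtain ⟨y, hy⟩ := hlin
  refine ⟨y, f (0, 1), fun q => ?_⟩
  have hq : q = (q.1, 0) + q.2 • ((0 : WeakDual ℝ X), (1 : ℝ)) := by
    simp [Prod.ext_iff]
  rw [hq, map_add, map_smul, smul_eq_mul, hy q.1]
  have : ((q.1, 0) + q.2 • ((0 : WeakDual ℝ X), (1 : ℝ))).1 = q.1 := by simp
  rw [this]
  ring_nf
  simp [mul_comm]

/-- Separation of an infeasible point from the `S`-epigraph: produces a dual pair
`(xs, l)` with `l ∈ S⁺`, `(xs, α) ∈ epi (l∘g)*` and `α < xs x`. -/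
lemma sep_lemma {X Z : Type*}
    [AddCommGroup X] [Module ℝ X] [TopologicalSpace X] [IsTopologicalAddGroup X]
    [ContinuousSMul ℝ X] [LocallyConvexSpace ℝ X]
    [AddCommGroup Z] [Module ℝ Z] [TopologicalSpace Z] [IsTopologicalAddGroup Z]
    [ContinuousSMul ℝ Z] [LocallyConvexSpace ℝ Z]
    (S : Set Z) (hS_ne : S.Nonempty)
    (hS_cone : ∀ r : ℝ, 0 ≤ r → ∀ z ∈ S, r • z ∈ S)
    (g : X → Z)
    (hconv : Convex ℝ {p : X × Z | p.2 - g p.1 ∈ S})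
    (hclosed : IsClosed {p : X × Z | p.2 - g p.1 ∈ S})
    (x : X) (hx : g x ∉ -S) :
    ∃ (xs : WeakDual ℝ X) (l : WeakDual ℝ Z) (α : ℝ),
      (∀ z ∈ S, 0 ≤ l z) ∧ (∀ x' : X, xs x' - l (g x') ≤ α) ∧ α < xs x := by
  have h0S : (0 : Z) ∈ S := by
    obtain ⟨z, hz⟩ := hS_ne
    simpa using hS_cone 0 le_rfl z hz
  have hmem : ((x, (0 : Z)) : X × Z) ∉ {p : X × Z | p.2 - g p.1 ∈ S} := by
    intro h
    apply hx
    rw [Set.mem_neg]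
    simpa using h
  obtain ⟨f, α₀, hfx, hfb⟩ := geometric_hahn_banach_point_closed hconv hclosed hmem
  set x0 : X →L[ℝ] ℝ := f.comp (ContinuousLinearMap.inl ℝ X Z) with hx0
  set l0 : Z →L[ℝ] ℝ := f.comp (ContinuousLinearMap.inr ℝ X Z) with hl0
  have hsplit : ∀ (a : X) (b : Z), f (a, b) = x0 a + l0 b := by
    intro a b
    rw [show ((a, b) : X × Z) = (a, 0) + (0, b) by simp, map_add]
    rfl
  have hepi : ∀ (x' : X) (s : Z), s ∈ S → α₀ < x0 x' + l0 (g x') + l0 s := by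
    intro x' s hs
    have : ((x', g x' + s) : X × Z) ∈ {p : X × Z | p.2 - g p.1 ∈ S} := by
      simpa using hs
    have h2 := hfb _ this
    rw [hsplit, map_add] at h2
    linarith
  have hl0S : ∀ s ∈ S, 0 ≤ l0 s := by
    intro s hs
    by_contra hneg
    push_neg at hneg
    set C := x0 x + l0 (g x) with hC
    set t : ℝ := max 0 ((α₀ - C) / l0 s) with ht
    have ht0 : 0 ≤ t := le_max_left _ _
    have htS : t • s ∈ S := hS_cone t ht0 s hs
    have h2 := hepi x (t • s) htS
    rw [map_smul, smul_eq_mul] at h2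
    have h3 : (α₀ - C) / l0 s ≤ t := le_max_right _ _
    have h4 : t * l0 s ≤ α₀ - C := by
      rw [div_le_iff_of_neg hneg] at h3
      linarith [h3]
    linarith
  refine ⟨(-x0 : X →L[ℝ] ℝ), (l0 : Z →L[ℝ] ℝ), -α₀, hl0S, ?_, ?_⟩
  · intro x'
    have := hepi x' 0 h0S
    rw [map_zero] at this
    show (-x0) x' - l0 (g x') ≤ -α₀
    rw [ContinuousLinearMap.neg_apply]
    linarith
  · show -α₀ < (-x0) x
    rw [ContinuousLinearMap.neg_apply]
    have : f (x, 0) = x0 x + l0 0 := hsplit x 0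
    rw [map_zero] at this
    linarith [hfx, this]

instance wdLCS {X : Type*} [AddCommGroup X] [Module ℝ X] [TopologicalSpace X] :
    LocallyConvexSpace ℝ (WeakDual ℝ X) :=
  WeakBilin.locallyConvexSpace (B := topDualPairing ℝ X)

instance wdTAG {X : Type*} [AddCommGroup X] [Module ℝ X] [TopologicalSpace X] :
    IsTopologicalAddGroup (WeakDual ℝ X) :=
  WeakBilin.instIsTopologicalAddGroup (topDualPairing ℝ X)

/-- Characterization of stable robust strong duality for (RP_c) (Theorem 2.1 / `thm_StrD`):
the robust moment cone 𝓜₀ is closed and convex iff, for every `c` whose primal value is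
finite, robust strong duality with dual attainment holds. -/
theorem stmt3
    {X Z : Type*}
    [AddCommGroup X] [Module ℝ X] [TopologicalSpace X] [IsTopologicalAddGroup X]
    [ContinuousSMul ℝ X] [LocallyConvexSpace ℝ X] [T2Space X]
    [AddCommGroup Z] [Module ℝ Z] [TopologicalSpace Z] [IsTopologicalAddGroup Z]
    [ContinuousSMul ℝ Z] [LocallyConvexSpace ℝ Z] [T2Space Z]
    (S : Set Z) (hS_ne : S.Nonempty) (hS_closed : IsClosed S) (hS_conv : Convex ℝ S)
    (hS_cone : ∀ r : ℝ, 0 ≤ r → ∀ z ∈ S, r • z ∈ S)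
    {ι : Type*} [Nonempty ι] (G : ι → X → Z)
    (hG_conv : ∀ u : ι, Convex ℝ {p : X × Z | p.2 - G u p.1 ∈ S})
    (hG_closed : ∀ u : ι, IsClosed {p : X × Z | p.2 - G u p.1 ∈ S})
    (hF : {x : X | ∀ u : ι, G u x ∈ -S}.Nonempty) :
    (IsClosed (⋃ u : ι, ⋃ l ∈ {l : WeakDual ℝ Z | ∀ z ∈ S, 0 ≤ l z},
        {q : WeakDual ℝ X × ℝ | ∀ x : X, q.1 x - l (G u x) ≤ q.2}) ∧
      Convex ℝ (⋃ u : ι, ⋃ l ∈ {l : WeakDual ℝ Z | ∀ z ∈ S, 0 ≤ l z},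
        {q : WeakDual ℝ X × ℝ | ∀ x : X, q.1 x - l (G u x) ≤ q.2})) ↔
    (∀ c : WeakDual ℝ X,
      ⊥ < ⨅ x : {x : X | ∀ u : ι, G u x ∈ -S}, ((c x.1 : ℝ) : EReal) →
      ∃ u : ι, ∃ l : WeakDual ℝ Z, (∀ z ∈ S, 0 ≤ l z) ∧
        (⨅ x : X, ((c x + l (G u x) : ℝ) : EReal)) =
          ⨅ x : {x : X | ∀ u : ι, G u x ∈ -S}, ((c x.1 : ℝ) : EReal)) := by
    classical
  set F' : Set X := {x : X | ∀ u : ι, G u x ∈ -S} with hF'def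
  set M : Set (WeakDual ℝ X × ℝ) := ⋃ u : ι, ⋃ l ∈ {l : WeakDual ℝ Z | ∀ z ∈ S, 0 ≤ l z},
      {q : WeakDual ℝ X × ℝ | ∀ x : X, q.1 x - l (G u x) ≤ q.2} with hMdef
  have hMmem : ∀ q : WeakDual ℝ X × ℝ, q ∈ M ↔ ∃ u : ι, ∃ l : WeakDual ℝ Z,
      (∀ z ∈ S, 0 ≤ l z) ∧ ∀ x : X, q.1 x - l (G u x) ≤ q.2 := by
    intro q
    simp only [hMdef, Set.mem_iUnion, Set.mem_setOf_eq, exists_prop]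
  have hfeas : ∀ {l : WeakDual ℝ Z}, (∀ z ∈ S, 0 ≤ l z) →
      ∀ (u : ι) {x : X}, x ∈ F' → l (G u x) ≤ 0 := by
    intro l hl u x hx
    have h1 : -(G u x) ∈ S := Set.mem_neg.mp (hx u)
    have h2 := hl _ h1
    rw [map_neg] at h2
    linarith
  have hwd : ∀ q ∈ M, ∀ x ∈ F', q.1 x ≤ q.2 := by
    intro q hq x hx
    obtain ⟨u, l, hl, hql⟩ := (hMmem q).1 hq
    have h2 := hfeas hl u hx
    linarith [hql x]
  have u₀ : ι := Classical.arbitrary ι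
  have h0M : (((0 : WeakDual ℝ X), (0 : ℝ)) : WeakDual ℝ X × ℝ) ∈ M :=
    (hMmem _).2 ⟨u₀, 0, fun z _ => le_rfl, fun x => by
      show (0 : ℝ) - (0 : ℝ) ≤ 0; norm_num⟩
  have h1M : (((0 : WeakDual ℝ X), (1 : ℝ)) : WeakDual ℝ X × ℝ) ∈ M :=
    (hMmem _).2 ⟨u₀, 0, fun z _ => le_rfl, fun x => by
      show (0 : ℝ) - (0 : ℝ) ≤ 1; norm_num⟩
  have hcone : ∀ q ∈ M, ∀ t : ℝ, 0 < t → t • q ∈ M := by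
    intro q hq t ht
    obtain ⟨u, l, hl, hql⟩ := (hMmem q).1 hq
    refine (hMmem _).2 ⟨u, t • l, fun z hz => ?_, fun x => ?_⟩
    · show 0 ≤ t * l z
      exact mul_nonneg ht.le (hl z hz)
    · show t * q.1 x - t * l (G u x) ≤ t * q.2
      nlinarith [hql x]
  constructor
  · -- (a) → (b)
    rintro ⟨hMclosed, hMconv⟩ c hc
    obtain ⟨x₀, hx₀⟩ := hF
    set m := ⨅ x : F', ((c x.1 : ℝ) : EReal) with hm
    have hmle : ∀ x ∈ F', m ≤ ((c x : ℝ) : EReal) := fun x hx =>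
      iInf_le (fun x : F' => ((c x.1 : ℝ) : EReal)) (⟨x, hx⟩ : F')
    have hmt : m ≠ ⊤ := ((hmle x₀ hx₀).trans_lt (EReal.coe_lt_top _)).ne
    have hmb : m ≠ ⊥ := hc.ne'
    set r := m.toReal with hrdef
    have hr : (r : EReal) = m := EReal.coe_toReal hmt hmb
    have hrle : ∀ x ∈ F', r ≤ c x := by
      intro x hx
      have h1 := hmle x hx
      rw [← hr] at h1
      exact_mod_cast h1
    have hmemM : (((-c : WeakDual ℝ X), -r) : WeakDual ℝ X × ℝ) ∈ M := by
      by_contra hnot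
      obtain ⟨f, β, hfx, hfb⟩ := geometric_hahn_banach_point_closed hMconv hMclosed hnot
      obtain ⟨y, s, hrep⟩ := prod_dual_rep f
      have hβ0 : β < 0 := by
        have h1 := hfb _ h0M
        rw [hrep] at h1
        have h2 : (0 : WeakDual ℝ X) y = 0 := rfl
        rw [h2] at h1
        simpa using h1
      have hnn : ∀ q ∈ M, 0 ≤ f q := by
        intro q hq
        by_contra hqn
        push_neg at hqn
        have ht : (0 : ℝ) < (β - 1) / f q := div_pos_of_neg_of_neg (by linarith) hqn
        have h2 := hfb _ (hcone q hq _ ht)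
        rw [map_smul, smul_eq_mul, div_mul_cancel₀ _ hqn.ne] at h2
        linarith
      have hMy : ∀ q ∈ M, 0 ≤ q.1 y + s * q.2 := by
        intro q hq
        have h1 := hnn q hq
        rwa [hrep] at h1
      have hs0 : 0 ≤ s := by
        have h1 := hMy _ h1M
        have h2 : (0 : WeakDual ℝ X) y = 0 := rfl
        rw [h2] at h1
        simpa using h1
      have hfxval : -(c y) + s * (-r) < β := by
        have h1 := hfx
        rw [hrep] at h1
        have h2 : (-c : WeakDual ℝ X) y = -(c y) := rfl
        rwa [h2] at h1
      rcases hs0.eq_or_lt with hseq | hspos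
      · -- s = 0
        have hcy : 0 < c y := by rw [← hseq] at hfxval; nlinarith
        have hyM : ∀ q ∈ M, 0 ≤ q.1 y := by
          intro q hq
          have h1 := hMy q hq
          rw [← hseq] at h1
          linarith
        have hfeas' : ∀ t : ℝ, 0 ≤ t → (x₀ - t • y) ∈ F' := by
          intro t ht u
          by_contra hgu
          obtain ⟨xs, l, α, hl, hineq, hlt⟩ :=
            sep_lemma S hS_ne hS_cone (G u) (hG_conv u) (hG_closed u) _ hgu
          have hxsM : ((xs, α) : WeakDual ℝ X × ℝ) ∈ M := (hMmem _).2 ⟨u, l, hl, hineq⟩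
          have h1 : 0 ≤ xs y := hyM _ hxsM
          have h2 : xs x₀ ≤ α := by
            have h3 := hineq x₀
            have h4 := hfeas hl u hx₀
            linarith
          have h3 : xs (x₀ - t • y) = xs x₀ - t * xs y := by
            rw [map_sub, map_smul, smul_eq_mul]
          rw [h3] at hlt
          nlinarith
        set t := (c x₀ - r + 1) / (c y) with htdef
        have ht0 : 0 ≤ t := div_nonneg (by linarith [hrle x₀ hx₀]) hcy.le
        have hx1 := hfeas' t ht0
        have h5 := hrle _ hx1
        rw [map_sub, map_smul, smul_eq_mul, htdef, div_mul_cancel₀ _ hcy.ne'] at h5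
        linarith
      · -- s > 0
        set y' := (-(s⁻¹)) • y with hy'def
        have happ : ∀ g : WeakDual ℝ X, g y' = -(s⁻¹) * g y := by
          intro g; rw [hy'def, map_smul, smul_eq_mul]
        have hy'M : ∀ q ∈ M, q.1 y' ≤ q.2 := by
          intro q hq
          have h1 := hMy q hq
          rw [happ]
          have h3 : s⁻¹ * s = 1 := inv_mul_cancel₀ hspos.ne'
          have h8 : 0 ≤ s⁻¹ * q.1 y + q.2 := by
            have h9 := mul_nonneg (inv_pos.2 hspos).le h1
            rwa [mul_add, ← mul_assoc, h3, one_mul] at h9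
          linarith
        have hy'F : y' ∈ F' := by
          intro u
          by_contra hgu
          obtain ⟨xs, l, α, hl, hineq, hlt⟩ :=
            sep_lemma S hS_ne hS_cone (G u) (hG_conv u) (hG_closed u) _ hgu
          have hxsM : ((xs, α) : WeakDual ℝ X × ℝ) ∈ M := (hMmem _).2 ⟨u, l, hl, hineq⟩
          exact absurd (hy'M _ hxsM) (not_le.2 hlt)
        have h4 := hrle _ hy'F
        rw [happ] at h4
        have h6 : -(c y) - s * r < 0 := by nlinarith
        have h7 : s⁻¹ * s = 1 := inv_mul_cancel₀ hspos.ne'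
        have h8 : s⁻¹ * (-(c y) - s * r) < 0 := mul_neg_of_pos_of_neg (inv_pos.2 hspos) h6
        rw [mul_sub, ← mul_assoc, h7, one_mul] at h8
        have h9 : s⁻¹ * -(c y) = -(s⁻¹ * c y) := by ring
        rw [h9] at h8
        linarith
    obtain ⟨u, l, hl, hql⟩ := (hMmem _).1 hmemM
    have hql' : ∀ x : X, r ≤ c x + l (G u x) := by
      intro x
      have h1 := hql x
      have h2 : (-c : WeakDual ℝ X) x = -(c x) := rfl
      have h3 : (((-c : WeakDual ℝ X), -r) : WeakDual ℝ X × ℝ).2 = -r := rfl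
      rw [h2, h3] at h1
      linarith
    refine ⟨u, l, hl, le_antisymm ?_ ?_⟩
    · refine le_iInf fun x => iInf_le_of_le x.1 ?_
      have h1 := hfeas hl u x.2
      exact_mod_cast (by linarith : c x.1 + l (G u x.1) ≤ c x.1)
    · rw [← hr]
      exact le_iInf fun x => by exact_mod_cast hql' x
  · -- (b) → (a)
    intro h
    have hEq : M = {q : WeakDual ℝ X × ℝ | ∀ x ∈ F', q.1 x ≤ q.2} := by
      apply Set.Subset.antisymm
      · intro q hq x hx
        exact hwd q hq x hx
      · intro q hq
        set c : WeakDual ℝ X := -q.1 with hcdef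
        have hcx : ∀ x : X, c x = -(q.1 x) := fun x => rfl
        have hlow : ∀ x : F', ((-q.2 : ℝ) : EReal) ≤ ((c x.1 : ℝ) : EReal) := by
          intro x
          have h1 := hq x.1 x.2
          exact_mod_cast (by rw [hcx]; linarith : -q.2 ≤ c x.1)
        have hc : ⊥ < ⨅ x : F', ((c x.1 : ℝ) : EReal) :=
          lt_of_lt_of_le (EReal.bot_lt_coe _) (le_iInf hlow)
        obtain ⟨u, l, hl, heq⟩ := h c hc
        refine (hMmem q).2 ⟨u, l, hl, fun x => ?_⟩
        have h1 : ((-q.2 : ℝ) : EReal) ≤ ⨅ x : X, ((c x + l (G u x) : ℝ) : EReal) := by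
          rw [heq]; exact le_iInf hlow
        have h2 := le_trans h1 (iInf_le _ x)
        have h3 : -q.2 ≤ c x + l (G u x) := by exact_mod_cast h2
        rw [hcx] at h3
        show q.1 x - l (G u x) ≤ q.2
        linarith
    rw [hEq] at *
    constructor
    · have h2 : {q : WeakDual ℝ X × ℝ | ∀ x ∈ F', q.1 x ≤ q.2} =
          ⋂ x ∈ F', {q : WeakDual ℝ X × ℝ | q.1 x ≤ q.2} := by
        ext q; simp [Set.mem_iInter]
      rw [h2]
      refine isClosed_biInter fun x hx => isClosed_le ?_ continuous_snd
      exact (WeakDual.eval_continuous x).comp continuous_fst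
    · intro q hq q' hq' a b ha hb hab
      intro x hx
      show (a • q + b • q').1 x ≤ (a • q + b • q').2
      have h1 : (a • q + b • q').1 x = a * q.1 x + b * q'.1 x := rfl
      have h2 : (a • q + b • q').2 = a * q.2 + b * q'.2 := rfl
      rw [h1, h2]
      nlinarith [mul_le_mul_of_nonneg_left (hq x hx) ha,
        mul_le_mul_of_nonneg_left (hq' x hx) hb]
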